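/- arXiv:1902.00967 — 5 statements merged into one kernel-verified Lean document; each statement's English description precedes it below -/
import Mathlib

section
/- Let ρ be a separable state on ℂ^{d_A} ⊗ ℂ^{d_B}, i.e., ρ = ∑_{i ∈ Fin n} p_i • (A_i ⊗ₖ B_i) where each p_i ≥ 0, and each A_i (d_A×d_A) and B_i (d_B×d_B) is positive semidefinite. Then the partial transpose of ρ, defined entrywise by (T^p ρ)((i,μ),(j,ν)) = ρ((j,μ),(i,ν)), is positive semidefinite. Thus positivity of the partial transpose (PPT) is a necessary condition for separability. -/
open Matrix
open scoped Kronecker ComplexOrder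

open scoped MatrixOrder in
private lemma kron_psd {dA dB : ℕ} {A : Matrix (Fin dA) (Fin dA) ℂ}
    {B : Matrix (Fin dB) (Fin dB) ℂ} (hA : A.PosSemidef) (hB : B.PosSemidef) :
    (A ⊗ₖ B).PosSemidef := by
  obtain ⟨C, rfl⟩ := CStarAlgebra.nonneg_iff_eq_star_mul_self.mp hA.nonneg
  obtain ⟨D, rfl⟩ := CStarAlgebra.nonneg_iff_eq_star_mul_self.mp hB.nonneg
  simp only [star_eq_conjTranspose]
  have hct : (C ⊗ₖ D)ᴴ = Cᴴ ⊗ₖ Dᴴ := by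
    ext ⟨i, j⟩ ⟨k, l⟩
    simp [conjTranspose_apply, kroneckerMap_apply]
  rw [mul_kronecker_mul, ← hct]
  exact posSemidef_conjTranspose_mul_self _

private lemma smul_psd {m : Type*} [Fintype m] {r : ℝ} (hr : 0 ≤ r)
    {M : Matrix m m ℂ} (hM : M.PosSemidef) :
    ((r : ℂ) • M).PosSemidef := by
  rw [posSemidef_iff_dotProduct_mulVec]
  constructor
  · unfold IsHermitian
    rw [conjTranspose_smul, hM.1.eq]
    simp
  · intro x
    rw [smul_mulVec, dotProduct_smul, smul_eq_mul]
    exact mul_nonneg (by exact_mod_cast hr) (hM.dotProduct_mulVec_nonneg x)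

/-- PPT criterion (necessity): every separable state has a positive semidefinite
partial transpose. -/
theorem separable_state_partialTranspose_posSemidef
    {dA dB n : ℕ}
    (p : Fin n → ℝ) (hp : ∀ i, 0 ≤ p i)
    (A : Fin n → Matrix (Fin dA) (Fin dA) ℂ)
    (B : Fin n → Matrix (Fin dB) (Fin dB) ℂ)
    (hA : ∀ i, (A i).PosSemidef) (hB : ∀ i, (B i).PosSemidef)
    (ρ : Matrix (Fin dA × Fin dB) (Fin dA × Fin dB) ℂ)
    (hρ : ρ = ∑ i, (p i : ℂ) • (A i ⊗ₖ B i)) :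
    (Matrix.of fun a b => ρ (b.1, a.2) (a.1, b.2) :
      Matrix (Fin dA × Fin dB) (Fin dA × Fin dB) ℂ).PosSemidef := by
  have key : (Matrix.of fun a b => ρ (b.1, a.2) (a.1, b.2) :
      Matrix (Fin dA × Fin dB) (Fin dA × Fin dB) ℂ)
      = ∑ i, (p i : ℂ) • ((A i)ᵀ ⊗ₖ B i) := by
    ext ⟨a1, a2⟩ ⟨b1, b2⟩
    simp [hρ, Matrix.sum_apply, Matrix.smul_apply, kroneckerMap_apply,
      Matrix.transpose_apply]
  rw [key]
  refine Finset.sum_induction _ Matrix.PosSemidef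
    (fun a b ha hb => ha.add hb) Matrix.PosSemidef.zero fun i _ => ?_
  show ((p i : ℂ) • ((A i)ᵀ ⊗ₖ B i)).PosSemidef
  exact smul_psd (hp i) (kron_psd (hA i).transpose (hB i))
end

section
/- For p ∈ [0,1], let ρ_W be the two-qubit Werner state ρ_W = p • |Ψ⁻⟩⟨Ψ⁻| + ((1−p)/4) • I₄, where Ψ⁻ = (e_{01} − e_{10})/√2 is the singlet state (indices are pairs (i,μ) with i,μ ∈ Fin 2, Ψ⁻(0,1) = 1/√2, Ψ⁻(1,0) = −1/√2, other entries 0). Then the partial transpose of ρ_W, defined entrywise by (T^p ρ_W)((i,μ),(j,ν)) = ρ_W((j,μ),(i,ν)), is positive semidefinite if and only if p ≤ 1/3. -/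
open Matrix
open scoped ComplexOrder

/-- The two-qubit singlet state `(|01⟩ − |10⟩)/√2`. -/
noncomputable def singletVec : Fin 2 × Fin 2 → ℂ := fun x =>
  if x = (0, 1) then ((1 / Real.sqrt 2 : ℝ) : ℂ)
  else if x = (1, 0) then -((1 / Real.sqrt 2 : ℝ) : ℂ) else 0

lemma sqrt2_inv_sq : (((Real.sqrt 2 : ℝ) : ℂ))⁻¹ ^ 2 = 1/2 := by
  have h : (Real.sqrt 2)⁻¹ ^ 2 = 1/2 := by
    rw [← Real.sqrt_inv, sq, Real.mul_self_sqrt (by norm_num)]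
    norm_num
  rw [show (((Real.sqrt 2 : ℝ) : ℂ))⁻¹ ^ 2 = (((Real.sqrt 2)⁻¹ ^ 2 : ℝ) : ℂ) by
    push_cast; ring, h]
  norm_num

lemma sqrt2_inv_mul : (((Real.sqrt 2 : ℝ) : ℂ))⁻¹ * (((Real.sqrt 2 : ℝ) : ℂ))⁻¹ = 1/2 := by
  rw [← sq, sqrt2_inv_sq]

/-- The Werner state `p |Ψ⁻⟩⟨Ψ⁻| + (1−p)/4 · I` has a positive semidefinite partial
transpose if and only if `p ≤ 1/3`. -/
theorem werner_ppt_iff (p : ℝ) (hp0 : 0 ≤ p) (hp1 : p ≤ 1) :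
    let ρW : Matrix (Fin 2 × Fin 2) (Fin 2 × Fin 2) ℂ :=
      (p : ℂ) • Matrix.vecMulVec singletVec (star singletVec) +
        (((1 - p) / 4 : ℝ) : ℂ) • 1
    (Matrix.of fun a b => ρW (b.1, a.2) (a.1, b.2) :
        Matrix (Fin 2 × Fin 2) (Fin 2 × Fin 2) ℂ).PosSemidef ↔ p ≤ 1 / 3 := by
  intro ρW
  constructor
  · intro h
    set v : Fin 2 × Fin 2 → ℂ := fun a => if a = (0,0) ∨ a = (1,1) then 1 else 0 with hv
    have h2 := (Matrix.posSemidef_iff_dotProduct_mulVec.mp h).2 v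
    have hval : star v ⬝ᵥ ((Matrix.of fun a b => ρW (b.1, a.2) (a.1, b.2)) *ᵥ v)
        = (((1 - 3*p)/2 : ℝ) : ℂ) := by
      simp only [ρW, hv, dotProduct, Matrix.mulVec, Fintype.sum_prod_type,
        Fin.sum_univ_succ, Fin.sum_univ_zero, Matrix.of_apply, Matrix.add_apply,
        Matrix.smul_apply, Matrix.vecMulVec_apply, Matrix.one_apply, Pi.star_apply,
        singletVec]
      norm_num [Prod.ext_iff, sqrt2_inv_sq, sqrt2_inv_mul]
      push_cast
      ring
    rw [hval, Complex.zero_le_real] at h2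
    linarith
  · intro hp
    set s : ℝ := Real.sqrt (p/2) with hs
    have hss : (s:ℂ) * (s:ℂ) = ((p/2 : ℝ) : ℂ) := by
      rw [← Complex.ofReal_mul, hs, Real.mul_self_sqrt (by linarith)]
    set w : Fin 2 × Fin 2 → ℂ := fun a =>
      if a = (0,0) then (s:ℂ) else if a = (1,1) then -(s:ℂ) else 0 with hw
    set d : Fin 2 × Fin 2 → ℂ := fun a =>
      if a = (0,0) ∨ a = (1,1) then (((1 - 3*p)/4 : ℝ) : ℂ) else (((1 + p)/4 : ℝ) : ℂ)
      with hd
    have hM : (Matrix.of fun a b => ρW (b.1, a.2) (a.1, b.2) :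
        Matrix (Fin 2 × Fin 2) (Fin 2 × Fin 2) ℂ)
        = Matrix.diagonal d + Matrix.vecMulVec w (star w) := by
      ext ⟨i, μ⟩ ⟨j, ν⟩
      fin_cases i <;> fin_cases μ <;> fin_cases j <;> fin_cases ν <;>
        simp [ρW, hw, hd, singletVec, Matrix.one_apply, Matrix.diagonal_apply,
          Matrix.vecMulVec_apply, sqrt2_inv_sq, sqrt2_inv_mul, hss, Prod.ext_iff] <;>
        push_cast <;> ring
    rw [hM]
    refine Matrix.PosSemidef.add ?_ ?_
    · refine Matrix.posSemidef_diagonal_iff.mpr fun i => ?_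
      rw [hd]
      dsimp only
      split <;> rw [Complex.zero_le_real] <;> linarith
    · rw [Matrix.vecMulVec_eq Unit, ← Matrix.conjTranspose_replicateCol]
      exact Matrix.posSemidef_self_mul_conjTranspose _
end

section
/- Let H_B and B be n×n complex matrices with H_B Hermitian, let ρ_B be a positive semidefinite n×n matrix, and define B(s) = exp(i s H_B) * B * exp(−i s H_B) for s ∈ ℝ and the bath correlation function 𝓑(s,s') = Tr(ρ_B * B(s)† * B(s')). Then for every t ≥ 0, every m, and every family of real frequencies ω : Fin m → ℝ, the m×m matrix b with entries b_{k,l} = ∫₀ᵗ ∫₀ᵗ exp(i(ω_l s − ω_k s')) 𝓑(s,s') ds' ds defines a nonnegative quadratic form: for every w : Fin m → ℂ, the number ∑_{k,l} w_k · conj(w_l) · b_{k,l} is real and nonnegative. (This positivity of the coefficient matrix is what guarantees complete positivity of the coarse-grained Lindblad generator.) -/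
open Matrix
open scoped ComplexOrder

private lemma conj_intervalIntegral' (f : ℝ → ℂ) (a b : ℝ) :
    (starRingEnd ℂ) (∫ x in a..b, f x) = ∫ x in a..b, (starRingEnd ℂ) (f x) := by
  rw [intervalIntegral, intervalIntegral, map_sub, integral_conj, integral_conj]

private lemma sum_swap_5 {α β γ δ ε : Type*} [Fintype α] [Fintype β] [Fintype γ]
    [Fintype δ] [Fintype ε] (f : α → β → γ → δ → ε → ℂ) :
    ∑ a, ∑ b, ∑ c, ∑ d, ∑ e, f a b c d e
      = ∑ c, ∑ d, ∑ e, ∑ b, ∑ a, f a b c d e :=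
  calc ∑ a, ∑ b, ∑ c, ∑ d, ∑ e, f a b c d e
      = ∑ b, ∑ a, ∑ c, ∑ d, ∑ e, f a b c d e := Finset.sum_comm
    _ = ∑ b, ∑ c, ∑ a, ∑ d, ∑ e, f a b c d e :=
        Finset.sum_congr rfl fun b _ => Finset.sum_comm
    _ = ∑ b, ∑ c, ∑ d, ∑ a, ∑ e, f a b c d e :=
        Finset.sum_congr rfl fun b _ => Finset.sum_congr rfl fun c _ => Finset.sum_comm
    _ = ∑ b, ∑ c, ∑ d, ∑ e, ∑ a, f a b c d e :=
        Finset.sum_congr rfl fun b _ => Finset.sum_congr rfl fun c _ =>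
          Finset.sum_congr rfl fun d _ => Finset.sum_comm
    _ = ∑ c, ∑ b, ∑ d, ∑ e, ∑ a, f a b c d e := Finset.sum_comm
    _ = ∑ c, ∑ d, ∑ b, ∑ e, ∑ a, f a b c d e :=
        Finset.sum_congr rfl fun c _ => Finset.sum_comm
    _ = ∑ c, ∑ d, ∑ e, ∑ b, ∑ a, f a b c d e :=
        Finset.sum_congr rfl fun c _ => Finset.sum_congr rfl fun d _ => Finset.sum_comm

/-- Positivity of the coarse-grained rate matrix: with `B(s)` the Heisenberg-picture
bath operator and `𝓑(s,s') = Tr(ρ_B B(s)† B(s'))` the bath correlation function, the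
matrix `b_{kl} = ∫₀ᵗ∫₀ᵗ e^{i(ω_l s − ω_k s')} 𝓑(s,s') ds' ds` defines a nonnegative
quadratic form. -/
theorem coarseGrained_rate_matrix_posSemidef
    {n m : ℕ} (HB B : Matrix (Fin n) (Fin n) ℂ) (hHB : HBᴴ = HB)
    (ρB : Matrix (Fin n) (Fin n) ℂ) (hρB : ρB.PosSemidef)
    (t : ℝ) (ht : 0 ≤ t) (ω : Fin m → ℝ) :
    let Bt : ℝ → Matrix (Fin n) (Fin n) ℂ := fun s =>
      NormedSpace.exp ((Complex.I * (s : ℂ)) • HB) * B *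
        NormedSpace.exp ((-(Complex.I * (s : ℂ))) • HB)
    let corr : ℝ → ℝ → ℂ := fun s s' => (ρB * (Bt s)ᴴ * Bt s').trace
    let b : Fin m → Fin m → ℂ := fun k l =>
      ∫ s in (0 : ℝ)..t, ∫ s' in (0 : ℝ)..t,
        Complex.exp (Complex.I * ((ω l : ℂ) * s - (ω k : ℂ) * s')) * corr s s'
    ∀ w : Fin m → ℂ, 0 ≤ ∑ k, ∑ l, w k * (starRingEnd ℂ) (w l) * b k l := by
  intro Bt corr b w
  -- continuity of the matrix entries of `Bt`
  have hBt : ∀ p i, Continuous fun s : ℝ => Bt s p i := by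
    intro p i
    letI : NormedRing (Matrix (Fin n) (Fin n) ℂ) := Matrix.linftyOpNormedRing
    letI : NormedAlgebra ℂ (Matrix (Fin n) (Fin n) ℂ) := Matrix.linftyOpNormedAlgebra
    letI : NormedAlgebra ℚ (Matrix (Fin n) (Fin n) ℂ) :=
      NormedAlgebra.restrictScalars ℚ ℂ (Matrix (Fin n) (Fin n) ℂ)
    have hexp : Continuous (NormedSpace.exp : Matrix (Fin n) (Fin n) ℂ → _) :=
      NormedSpace.exp_continuous
    have h1 : Continuous fun s : ℝ => NormedSpace.exp ((Complex.I * (s : ℂ)) • HB) :=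
      hexp.comp ((continuous_const.mul Complex.continuous_ofReal).smul continuous_const)
    have h2 : Continuous fun s : ℝ => NormedSpace.exp ((-(Complex.I * (s : ℂ))) • HB) :=
      hexp.comp (((continuous_const.mul Complex.continuous_ofReal).neg).smul continuous_const)
    exact Continuous.matrix_elem ((h1.matrix_mul continuous_const).matrix_mul h2) p i
  -- expansion of the correlation function as a triple sum
  have hcorr : ∀ s s', corr s s' =
      ∑ i, ∑ p, ∑ j, ρB i j * (starRingEnd ℂ) (Bt s p j) * Bt s' p i := by
    intro s s'
    simp only [corr, Matrix.trace, Matrix.diag, Matrix.mul_apply,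
      Matrix.conjTranspose_apply, Finset.sum_mul, RCLike.star_def]
  -- the elementary exponentials
  set e₁ : Fin m → ℝ → ℂ := fun l s => Complex.exp (Complex.I * (ω l : ℂ) * s) with he₁
  set e₂ : Fin m → ℝ → ℂ := fun k s => Complex.exp (-(Complex.I * (ω k : ℂ) * s)) with he₂
  have hce₁ : ∀ l, Continuous (e₁ l) := fun l =>
    Complex.continuous_exp.comp ((continuous_const.mul Complex.continuous_ofReal))
  have hce₂ : ∀ k, Continuous (e₂ k) := fun k =>
    Complex.continuous_exp.comp ((continuous_const.mul Complex.continuous_ofReal).neg)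
  set X : Fin m → Fin n → Fin n → ℂ :=
    fun l p j => ∫ s in (0:ℝ)..t, e₁ l s * (starRingEnd ℂ) (Bt s p j) with hX
  set Y : Fin m → Fin n → Fin n → ℂ :=
    fun k p i => ∫ s' in (0:ℝ)..t, e₂ k s' * Bt s' p i with hY
  -- Step 1: factor each `b k l` into products of single integrals
  have hb : ∀ k l, b k l = ∑ i, ∑ p, ∑ j, ρB i j * X l p j * Y k p i := by
    intro k l
    have hinner : ∀ s : ℝ,
        (∫ s' in (0:ℝ)..t,
          Complex.exp (Complex.I * ((ω l : ℂ) * s - (ω k : ℂ) * s')) * corr s s')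
        = ∑ i, ∑ p, ∑ j, (ρB i j * (e₁ l s * (starRingEnd ℂ) (Bt s p j))) * Y k p i := by
      intro s
      have key : ∀ s' : ℝ,
          Complex.exp (Complex.I * ((ω l : ℂ) * s - (ω k : ℂ) * s')) * corr s s'
          = ∑ i, ∑ p, ∑ j, (ρB i j * (e₁ l s * (starRingEnd ℂ) (Bt s p j))) *
              (e₂ k s' * Bt s' p i) := by
        intro s'
        rw [hcorr s s', Finset.mul_sum]
        refine Finset.sum_congr rfl fun i _ => ?_
        rw [Finset.mul_sum]
        refine Finset.sum_congr rfl fun p _ => ?_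
        rw [Finset.mul_sum]
        refine Finset.sum_congr rfl fun j _ => ?_
        have hsplit : Complex.exp (Complex.I * ((ω l : ℂ) * s - (ω k : ℂ) * s'))
            = e₁ l s * e₂ k s' := by
          rw [he₁, he₂, ← Complex.exp_add]
          ring_nf
        rw [hsplit]; ring
      rw [intervalIntegral.integral_congr (g := fun s' =>
        ∑ i, ∑ p, ∑ j, (ρB i j * (e₁ l s * (starRingEnd ℂ) (Bt s p j))) *
          (e₂ k s' * Bt s' p i)) (fun s' _ => key s')]
      rw [intervalIntegral.integral_finset_sum]
      · refine Finset.sum_congr rfl fun i _ => ?_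
        rw [intervalIntegral.integral_finset_sum]
        · refine Finset.sum_congr rfl fun p _ => ?_
          rw [intervalIntegral.integral_finset_sum]
          · exact Finset.sum_congr rfl fun j _ =>
              intervalIntegral.integral_const_mul _ _
          · intro j _
            exact (continuous_const.mul ((hce₂ k).mul (hBt p i))).intervalIntegrable 0 t
        · intro p _
          exact ((continuous_finset_sum _ fun j _ =>
            continuous_const.mul ((hce₂ k).mul (hBt p i)))).intervalIntegrable 0 t
      · intro i _
        exact (continuous_finset_sum _ fun p _ => continuous_finset_sum _ fun j _ =>
          continuous_const.mul ((hce₂ k).mul (hBt p i))).intervalIntegrable 0 t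
    calc b k l = ∫ s in (0:ℝ)..t,
          ∑ i, ∑ p, ∑ j, (ρB i j * (e₁ l s * (starRingEnd ℂ) (Bt s p j))) * Y k p i := by
            exact intervalIntegral.integral_congr fun s _ => hinner s
      _ = ∑ i, ∑ p, ∑ j, ρB i j * X l p j * Y k p i := by
            rw [intervalIntegral.integral_finset_sum]
            · refine Finset.sum_congr rfl fun i _ => ?_
              rw [intervalIntegral.integral_finset_sum]
              · refine Finset.sum_congr rfl fun p _ => ?_
                rw [intervalIntegral.integral_finset_sum]
                · refine Finset.sum_congr rfl fun j _ => ?_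
                  have h9 : ∀ s : ℝ, (ρB i j * (e₁ l s * (starRingEnd ℂ) (Bt s p j))) * Y k p i
                      = (ρB i j * Y k p i) * (e₁ l s * (starRingEnd ℂ) (Bt s p j)) :=
                    fun s => by ring
                  rw [intervalIntegral.integral_congr (fun s _ => h9 s),
                    intervalIntegral.integral_const_mul, hX]
                  ring
                · intro j _
                  exact (((continuous_const.mul ((hce₁ l).mul
                    ((Complex.continuous_conj).comp (hBt p j)))).mul
                    continuous_const)).intervalIntegrable 0 t
              · intro p _
                exact (continuous_finset_sum _ fun j _ =>
                  ((continuous_const.mul ((hce₁ l).mul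
                    ((Complex.continuous_conj).comp (hBt p j)))).mul
                    continuous_const)).intervalIntegrable 0 t
            · intro i _
              exact (continuous_finset_sum _ fun p _ => continuous_finset_sum _ fun j _ =>
                ((continuous_const.mul ((hce₁ l).mul
                  ((Complex.continuous_conj).comp (hBt p j)))).mul
                  continuous_const)).intervalIntegrable 0 t
  -- the amalgamated single integrals
  set g : ℝ → ℂ := fun s => ∑ k, w k * e₂ k s with hg
  set f : Fin n → Fin n → ℂ := fun p i => ∫ s in (0:ℝ)..t, g s * Bt s p i with hf
  have hfc : ∀ p j, (starRingEnd ℂ) (f p j) = ∑ l, (starRingEnd ℂ) (w l) * X l p j := by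
    intro p j
    simp only [hf]
    rw [conj_intervalIntegral']
    have key : ∀ s : ℝ, (starRingEnd ℂ) (g s * Bt s p j)
        = ∑ l, (starRingEnd ℂ) (w l) * (e₁ l s * (starRingEnd ℂ) (Bt s p j)) := by
      intro s
      rw [_root_.map_mul, hg]
      simp only [map_sum, _root_.map_mul]
      rw [Finset.sum_mul]
      refine Finset.sum_congr rfl fun l _ => ?_
      have hconj : (starRingEnd ℂ) (e₂ l s) = e₁ l s := by
        rw [he₁, he₂, ← Complex.exp_conj]
        congr 1
        simp [Complex.conj_ofReal]
      rw [hconj]; ring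
    rw [intervalIntegral.integral_congr (fun s _ => key s),
      intervalIntegral.integral_finset_sum]
    · exact Finset.sum_congr rfl fun l _ => intervalIntegral.integral_const_mul _ _
    · intro l _
      exact (continuous_const.mul ((hce₁ l).mul
        ((Complex.continuous_conj).comp (hBt p j)))).intervalIntegrable 0 t
  have hfe : ∀ p i, f p i = ∑ k, w k * Y k p i := by
    intro p i
    simp only [hf]
    have key : ∀ s : ℝ, g s * Bt s p i = ∑ k, w k * (e₂ k s * Bt s p i) := by
      intro s
      rw [hg, Finset.sum_mul]
      exact Finset.sum_congr rfl fun k _ => by ring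
    rw [intervalIntegral.integral_congr (fun s _ => key s),
      intervalIntegral.integral_finset_sum]
    · exact Finset.sum_congr rfl fun k _ => intervalIntegral.integral_const_mul _ _
    · intro k _
      exact (continuous_const.mul ((hce₂ k).mul (hBt p i))).intervalIntegrable 0 t
  -- Step 2: the quadratic form equals `∑ ρ i j · conj (f p j) · f p i`
  have hsum : ∑ k, ∑ l, w k * (starRingEnd ℂ) (w l) * b k l
      = ∑ i, ∑ p, ∑ j, ρB i j * (starRingEnd ℂ) (f p j) * f p i :=
    calc ∑ k, ∑ l, w k * (starRingEnd ℂ) (w l) * b k l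
        = ∑ k, ∑ l, ∑ i, ∑ p, ∑ j,
            w k * (starRingEnd ℂ) (w l) * (ρB i j * X l p j * Y k p i) := by
          simp_rw [hb, Finset.mul_sum]
      _ = ∑ i, ∑ p, ∑ j, ∑ l, ∑ k,
            w k * (starRingEnd ℂ) (w l) * (ρB i j * X l p j * Y k p i) :=
          sum_swap_5 _
      _ = ∑ i, ∑ p, ∑ j, ρB i j * (starRingEnd ℂ) (f p j) * f p i := by
          refine Finset.sum_congr rfl fun i _ => Finset.sum_congr rfl fun p _ =>
            Finset.sum_congr rfl fun j _ => ?_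
          rw [hfc, hfe, Finset.mul_sum, Finset.sum_comm]
          refine Finset.sum_congr rfl fun k _ => ?_
          rw [Finset.mul_sum, Finset.sum_mul]
          refine Finset.sum_congr rfl fun l _ => ?_
          ring
  rw [hsum, Finset.sum_comm]
  refine Finset.sum_nonneg fun p _ => ?_
  refine le_trans (hρB.dotProduct_mulVec_nonneg (fun j => (starRingEnd ℂ) (f p j))) (le_of_eq ?_)
  simp only [dotProduct, Matrix.mulVec, dotProduct, Pi.star_apply, RCLike.star_def,
    Complex.conj_conj, Finset.mul_sum]
  refine Finset.sum_congr rfl fun i _ => Finset.sum_congr rfl fun j _ => by ring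
end

section
/- Heisenberg uncertainty principle: let V be a complex inner product space, let C and D be symmetric (self-adjoint) linear operators on V, and let ψ ∈ V be a unit vector. Write ⟨A⟩ = ⟪ψ, A ψ⟫ for the expectation value and ΔA = √(⟪ψ, (A − ⟨A⟩•id)² ψ⟫) for the standard deviation (this inner product is a nonnegative real for symmetric A). Then (ΔC)·(ΔD) ≥ (1/2)·|⟪ψ, (C∘D − D∘C) ψ⟫|. -/
open scoped InnerProductSpace

/-- Heisenberg uncertainty principle: for symmetric (self-adjoint) operators `C`, `D`
on a complex inner product space and a unit vector `ψ`,
`ΔC · ΔD ≥ ½ |⟨ψ, [C,D] ψ⟩|`, where `ΔA = √⟨ψ, (A − ⟨A⟩)² ψ⟩`. -/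
theorem heisenberg_uncertainty
    {V : Type*} [NormedAddCommGroup V] [InnerProductSpace ℂ V]
    (C D : V →ₗ[ℂ] V) (hC : C.IsSymmetric) (hD : D.IsSymmetric)
    (ψ : V) (hψ : ‖ψ‖ = 1) :
    (1 / 2) * ‖(⟪ψ, (C ∘ₗ D - D ∘ₗ C) ψ⟫_ℂ)‖ ≤
      Real.sqrt
        (Complex.re ⟪ψ, ((C - ⟪ψ, C ψ⟫_ℂ • LinearMap.id) ∘ₗ
            (C - ⟪ψ, C ψ⟫_ℂ • LinearMap.id)) ψ⟫_ℂ) *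
      Real.sqrt
        (Complex.re ⟪ψ, ((D - ⟪ψ, D ψ⟫_ℂ • LinearMap.id) ∘ₗ
            (D - ⟪ψ, D ψ⟫_ℂ • LinearMap.id)) ψ⟫_ℂ) := by
  set c := ⟪ψ, C ψ⟫_ℂ with hc
  set d := ⟪ψ, D ψ⟫_ℂ with hd
  have hcc : (starRingEnd ℂ) c = c := by rw [hc, inner_conj_symm, hC]
  have hdc : (starRingEnd ℂ) d = d := by rw [hd, inner_conj_symm, hD]
  set a := C ψ - c • ψ with ha
  set b := D ψ - d • ψ with hb
  have hnorm : ⟪ψ, ψ⟫_ℂ = 1 := by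
    rw [inner_self_eq_norm_sq_to_K, hψ]; norm_num
  have key : ∀ (A : V →ₗ[ℂ] V), A.IsSymmetric → ∀ (e : ℂ), (starRingEnd ℂ) e = e →
      Complex.re ⟪ψ, ((A - e • (LinearMap.id : V →ₗ[ℂ] V)) ∘ₗ
        (A - e • (LinearMap.id : V →ₗ[ℂ] V))) ψ⟫_ℂ = ‖A ψ - e • ψ‖^2 := by
    intro A hA e he
    have hsym : (A - e • (LinearMap.id : V →ₗ[ℂ] V)).IsSymmetric := by
      intro x y
      simp [LinearMap.sub_apply, LinearMap.smul_apply, inner_sub_left, inner_sub_right,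
        inner_smul_left, inner_smul_right, hA x y, he]
    have h1 : ⟪ψ, ((A - e • (LinearMap.id : V →ₗ[ℂ] V)) ∘ₗ
        (A - e • (LinearMap.id : V →ₗ[ℂ] V))) ψ⟫_ℂ
        = ⟪(A - e • (LinearMap.id : V →ₗ[ℂ] V)) ψ,
            (A - e • (LinearMap.id : V →ₗ[ℂ] V)) ψ⟫_ℂ := by
      rw [LinearMap.comp_apply, ← hsym]
    rw [h1, inner_self_eq_norm_sq_to_K]
    simp only [LinearMap.sub_apply, LinearMap.smul_apply, LinearMap.id_coe, id_eq]
    norm_cast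
  rw [key C hC c hcc, key D hD d hdc,
    Real.sqrt_sq (norm_nonneg _), Real.sqrt_sq (norm_nonneg _)]
  set z := ⟪C ψ, D ψ⟫_ℂ with hz
  have hcomm : ⟪ψ, (C ∘ₗ D - D ∘ₗ C) ψ⟫_ℂ = z - (starRingEnd ℂ) z := by
    rw [LinearMap.sub_apply, inner_sub_right, LinearMap.comp_apply, LinearMap.comp_apply,
      ← hC ψ (D ψ), ← hD ψ (C ψ), hz, inner_conj_symm]
  have hab : ⟪a, b⟫_ℂ = z - c * d := by
    simp only [ha, hb, inner_sub_left, inner_sub_right, inner_smul_left, inner_smul_right,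
      hnorm, hcc]
    rw [← hd, ← hz]
    have h1 : ⟪C ψ, ψ⟫_ℂ = (starRingEnd ℂ) c := by rw [hc, inner_conj_symm]
    rw [h1, hcc]
    ring
  have hcd : Complex.im (c * d) = 0 := by
    have : (starRingEnd ℂ) (c * d) = c * d := by rw [map_mul, hcc, hdc]
    exact Complex.conj_eq_iff_im.mp this
  have him2 : Complex.im ⟪a, b⟫_ℂ = z.im := by
    rw [hab]; simp [hcd]
  have him : ‖(⟪ψ, (C ∘ₗ D - D ∘ₗ C) ψ⟫_ℂ)‖ = 2 * |Complex.im ⟪a, b⟫_ℂ| := by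
    rw [hcomm, him2, Complex.sub_conj]
    simp [map_mul]
  rw [him]
  have h2 : |Complex.im ⟪a, b⟫_ℂ| ≤ ‖⟪a, b⟫_ℂ‖ := Complex.abs_im_le_norm _
  have h3 : ‖⟪a, b⟫_ℂ‖ ≤ ‖a‖ * ‖b‖ := by
    exact norm_inner_le_norm a b
  linarith
end

section
/- Coarse-graining recovers the Markovian rate: let f : ℝ → ℂ be measurable with f(−u) = conj(f(u)) for all u, ∫₀^∞ |f(u)| du < ∞, and ∫₀^∞ u·|f(u)| du < ∞ (a bath correlation function with finite correlation time). Then for every ω ∈ ℝ, the time-averaged double integral converges as the coarse-graining time T → ∞: (1/T) ∫₀ᵀ ∫₀ᵀ e^{i ω (t − s)} f(t − s) ds dt → ∫_{−∞}^{∞} e^{i ω u} f(u) du. That is, the coarse-grained rate γ_{ωω}(T) tends to the Fourier transform γ(ω) of the correlation function. -/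
open MeasureTheory Filter

lemma cesaro_zero' {h : ℝ → ℂ} (hc : Continuous h)
    (hL : Tendsto h atTop (nhds 0)) :
    Tendsto (fun T : ℝ => (1 / (T : ℂ)) * ∫ t in (0:ℝ)..T, h t) atTop (nhds 0) := by
  rw [Metric.tendsto_nhds]
  intro ε hε
  have hε2 : 0 < ε / 2 := by linarith
  obtain ⟨M₀, hM₀⟩ := (Metric.tendsto_nhds.mp hL (ε/2) hε2).exists_forall_of_atTop
  set M : ℝ := max M₀ 0 with hMdef
  have h0M : (0:ℝ) ≤ M := le_max_right _ _
  have hM : ∀ x ≥ M, dist (h x) 0 < ε/2 := fun x hx => hM₀ x (le_trans (le_max_left _ _) hx)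
  set C : ℝ := ‖∫ t in (0:ℝ)..M, h t‖ with hC
  filter_upwards [eventually_ge_atTop (max M 1), eventually_gt_atTop (2 * C / ε)] with T hT1 hT2
  have hTM : M ≤ T := le_trans (le_max_left _ _) hT1
  have hT0 : (0:ℝ) < T := lt_of_lt_of_le one_pos (le_trans (le_max_right _ _) hT1)
  have hsplit : (∫ t in (0:ℝ)..T, h t) = (∫ t in (0:ℝ)..M, h t) + ∫ t in M..T, h t :=
    (intervalIntegral.integral_add_adjacent_intervals (hc.intervalIntegrable _ _) (hc.intervalIntegrable _ _)).symm
  have hbound : ‖∫ t in M..T, h t‖ ≤ (ε/2) * |T - M| := by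
    apply intervalIntegral.norm_integral_le_of_norm_le_const
    intro x hx
    rw [Set.uIoc_of_le hTM] at hx
    have := hM x (le_of_lt hx.1)
    simpa using this.le
  have key : ‖∫ t in (0:ℝ)..T, h t‖ ≤ C + ε/2 * T := by
    rw [hsplit]
    calc ‖(∫ t in (0:ℝ)..M, h t) + ∫ t in M..T, h t‖
        ≤ C + ‖∫ t in M..T, h t‖ := norm_add_le _ _
      _ ≤ C + ε/2 * |T - M| := by linarith
      _ ≤ C + ε/2 * T := by
          have : |T - M| ≤ T := by
            rw [abs_of_nonneg (by linarith)]
            linarith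
          nlinarith
  rw [dist_zero_right]
  have : ‖(1 / (T : ℂ)) * ∫ t in (0:ℝ)..T, h t‖ = (1/T) * ‖∫ t in (0:ℝ)..T, h t‖ := by
    rw [norm_mul]
    congr 1
    simp [abs_of_pos hT0]
  rw [this]
  have hCT : C / T < ε / 2 := by
    rw [div_lt_iff₀ hT0]
    have := (div_lt_iff₀ hε).mp hT2
    nlinarith
  calc (1/T) * ‖∫ t in (0:ℝ)..T, h t‖ ≤ (1/T) * (C + ε/2 * T) := by
        exact mul_le_mul_of_nonneg_left key (by positivity)
    _ = C / T + ε/2 := by field_simp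
    _ < ε := by linarith

lemma cesaro' {h : ℝ → ℂ} (hc : Continuous h) {L : ℂ}
    (hL : Tendsto h atTop (nhds L)) :
    Tendsto (fun T : ℝ => (1 / (T : ℂ)) * ∫ t in (0:ℝ)..T, h t) atTop (nhds L) := by
  have h0 : Tendsto (fun t : ℝ => h t - L) atTop (nhds 0) := by
    simpa using hL.sub_const L
  have hc0 : Continuous fun t : ℝ => h t - L := hc.sub continuous_const
  have := (cesaro_zero' hc0 h0).add_const L
  rw [zero_add] at this
  apply this.congr'
  filter_upwards [eventually_gt_atTop (0:ℝ)] with T hT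
  have hTne : (T : ℂ) ≠ 0 := by exact_mod_cast ne_of_gt hT
  have : (∫ t in (0:ℝ)..T, (h t - L)) = (∫ t in (0:ℝ)..T, h t) - (T : ℝ) • L := by
    rw [intervalIntegral.integral_sub (hc.intervalIntegrable _ _)
      (intervalIntegrable_const), intervalIntegral.integral_const, sub_zero]
  rw [this]
  field_simp
  rw [Complex.real_smul]
  ring

/-- Coarse-graining recovers the Markovian rate: for a bath correlation function `f`
with Hermitian symmetry `f(−u) = conj(f(u))` and finite correlation time (both `f`
and `u ↦ u f(u)` integrable on `[0,∞)`), the time-averaged double integral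
`(1/T) ∫₀ᵀ∫₀ᵀ e^{iω(t−s)} f(t−s) ds dt` converges, as `T → ∞`, to the Fourier
transform `∫ℝ e^{iωu} f(u) du`. -/
theorem coarseGrained_rate_tendsto_fourier
    (f : ℝ → ℂ) (hmeas : Measurable f)
    (hsym : ∀ u : ℝ, f (-u) = (starRingEnd ℂ) (f u))
    (hint : IntegrableOn f (Set.Ici 0) volume)
    (hint' : IntegrableOn (fun u : ℝ => u • f u) (Set.Ici 0) volume)
    (ω : ℝ) :
    Tendsto
      (fun T : ℝ => (1 / (T : ℂ)) *
        ∫ t in (0 : ℝ)..T, ∫ s in (0 : ℝ)..T,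
          Complex.exp (Complex.I * (ω : ℂ) * ((t : ℂ) - (s : ℂ))) * f (t - s))
      atTop
      (nhds (∫ u : ℝ, Complex.exp (Complex.I * (ω : ℂ) * (u : ℂ)) * f u)) := by
  -- the correlation function times the phase
  set g : ℝ → ℂ := fun u => Complex.exp (Complex.I * (ω : ℂ) * (u : ℂ)) * f u with hg
  -- f is integrable on Iic 0 by symmetry, hence on all of ℝ
  have hIic : IntegrableOn f (Set.Iic 0) volume := by
    have h1 : IntegrableOn (fun u : ℝ => f (-u)) (Set.Ici 0) volume := by
      have : (fun u : ℝ => f (-u)) = fun u => (starRingEnd ℂ) (f u) := funext hsym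
      rw [this]
      exact (Complex.conjCLE.toContinuousLinearMap).integrable_comp hint
    have hemb : MeasurableEmbedding (fun x : ℝ => -x) :=
      (Homeomorph.neg ℝ).measurableEmbedding
    have hmap : Measure.map (fun x : ℝ => -x) volume = volume :=
      (Measure.measurePreserving_neg volume).map_eq
    have h2 := hemb.integrableOn_map_iff (f := f) (s := Set.Iic (0:ℝ)) (μ := volume)
    rw [hmap] at h2
    exact h2.mpr (by simpa [Function.comp_def] using h1)
  have hf : Integrable f volume := by
    rw [← integrableOn_univ, ← Set.Iic_union_Ici (a := (0:ℝ))]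
    exact hIic.union hint
  -- g is integrable
  have hgmeas : Measurable g := by
    apply Measurable.mul _ hmeas
    exact (Complex.continuous_exp.comp (by continuity)).measurable
  have hgnorm : ∀ u : ℝ, ‖g u‖ = ‖f u‖ := by
    intro u
    rw [hg]
    simp only [norm_mul]
    have : ‖Complex.exp (Complex.I * (ω : ℂ) * (u : ℂ))‖ = 1 := by
      rw [Complex.norm_exp]
      simp [Complex.mul_re, Complex.mul_im]
    rw [this, one_mul]
  have hgint : Integrable g volume := by
    refine hf.norm.mono' hgmeas.aestronglyMeasurable ?_
    filter_upwards with u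
    rw [hgnorm u]
  -- the primitive of g
  set H : ℝ → ℂ := fun t => ∫ u in (0:ℝ)..t, g u with hH
  have hHcont : Continuous H :=
    intervalIntegral.continuous_primitive (fun a b => hgint.intervalIntegrable) 0
  -- rewrite the double integral
  have key : ∀ T : ℝ, (∫ t in (0 : ℝ)..T, ∫ s in (0 : ℝ)..T,
      Complex.exp (Complex.I * (ω : ℂ) * ((t : ℂ) - (s : ℂ))) * f (t - s))
      = ∫ t in (0:ℝ)..T, (H t - H (-t)) := by
    intro T
    have inner : ∀ t : ℝ, (∫ s in (0:ℝ)..T,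
        Complex.exp (Complex.I * (ω : ℂ) * ((t : ℂ) - (s : ℂ))) * f (t - s))
        = H t - H (t - T) := by
      intro t
      have e1 : (∫ s in (0:ℝ)..T,
          Complex.exp (Complex.I * (ω : ℂ) * ((t : ℂ) - (s : ℂ))) * f (t - s))
          = ∫ s in (0:ℝ)..T, g (t - s) := by
        apply intervalIntegral.integral_congr
        intro s _
        rw [hg]
        push_cast
        ring_nf
      rw [e1, intervalIntegral.integral_comp_sub_left g t]
      rw [sub_zero]
      exact (intervalIntegral.integral_interval_sub_left
        (hgint.intervalIntegrable) (hgint.intervalIntegrable)).symm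
    calc (∫ t in (0 : ℝ)..T, ∫ s in (0 : ℝ)..T,
        Complex.exp (Complex.I * (ω : ℂ) * ((t : ℂ) - (s : ℂ))) * f (t - s))
        = ∫ t in (0:ℝ)..T, (H t - H (t - T)) :=
          intervalIntegral.integral_congr (fun t _ => inner t)
      _ = (∫ t in (0:ℝ)..T, H t) - ∫ t in (0:ℝ)..T, H (t - T) :=
          intervalIntegral.integral_sub (hHcont.intervalIntegrable _ _)
            ((hHcont.comp (continuous_sub_right T)).intervalIntegrable _ _)
      _ = (∫ t in (0:ℝ)..T, H t) - ∫ t in (-T)..(0:ℝ), H t := by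
          rw [intervalIntegral.integral_comp_sub_right H T, zero_sub, sub_self]
      _ = (∫ t in (0:ℝ)..T, H t) - ∫ t in (0:ℝ)..T, H (-t) := by
          rw [intervalIntegral.integral_comp_neg (fun t => H t), neg_zero]
      _ = ∫ t in (0:ℝ)..T, (H t - H (-t)) :=
          (intervalIntegral.integral_sub (hHcont.intervalIntegrable _ _)
            ((hHcont.comp continuous_neg).intervalIntegrable _ _)).symm
  simp only [key]
  -- limits of H
  have hHtop : Tendsto H atTop (nhds (∫ u in Set.Ioi (0:ℝ), g u)) :=
    intervalIntegral_tendsto_integral_Ioi 0 hgint.integrableOn tendsto_id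
  have hHbot : Tendsto (fun t : ℝ => H (-t)) atTop (nhds (-∫ u in Set.Iic (0:ℝ), g u)) := by
    have h1 : Tendsto (fun a : ℝ => ∫ u in a..(0:ℝ), g u) atBot
        (nhds (∫ u in Set.Iic (0:ℝ), g u)) :=
      intervalIntegral_tendsto_integral_Iic 0 hgint.integrableOn tendsto_id
    have h2 := (h1.comp tendsto_neg_atTop_atBot).neg
    apply h2.congr
    intro t
    exact (intervalIntegral.integral_symm (-t) 0).symm
  have hlim : Tendsto (fun t : ℝ => H t - H (-t)) atTop
      (nhds (∫ u : ℝ, g u)) := by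
    have := hHtop.sub hHbot
    rw [sub_neg_eq_add, add_comm] at this
    rwa [intervalIntegral.integral_Iic_add_Ioi (b := (0:ℝ)) hgint.integrableOn hgint.integrableOn] at this
  exact cesaro' (hHcont.sub (hHcont.comp continuous_neg)) hlim
end
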